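/- Assume (H). Then b̃ is bounded on ℝ^d, and b̃ is Lipschitz on every convex compact subset of ℝ^d \ Γ; in particular b̃ is locally Lipschitz on ℝ^d \ Γ. -/

import Mathlib

set_option maxHeartbeats 1600000


open MeasureTheory Real Set
open scoped RealInnerProductSpace ENNReal NNReal

noncomputable section

abbrev Euc (d : ℕ) := EuclideanSpace ℝ (Fin d)

variable {d : ℕ}

/-- gradient of `g` with respect to its first variable -/
def grad1 (g : Euc d → Euc d → ℝ) (y x : Euc d) : Euc d :=
  gradient (fun z => g z x) y

/-- Hessian of `g` with respect to its first variable, as a continuous bilinear map -/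
def hess11 (g : Euc d → Euc d → ℝ) (y x : Euc d) : Euc d →L[ℝ] Euc d →L[ℝ] ℝ :=
  fderiv ℝ (fderiv ℝ (fun z => g z x)) y

/-- set of evolutionary singularities -/
def Gam (g : Euc d → Euc d → ℝ) : Set (Euc d) := {x | grad1 g x x = 0}

def GamAlpha (g : Euc d → Euc d → ℝ) (α : ℝ) : Set (Euc d) :=
  {x | α ≤ Metric.infDist x (Gam g) ∧ ‖x‖ ≤ 1 / α}

/-- `p` is a measurable symmetric probability-density kernel -/
def IsMutKernel (p : Euc d → Euc d → ℝ) : Prop :=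
  Measurable (Function.uncurry p) ∧
  (∀ x h, 0 ≤ p x h) ∧
  (∀ x, Integrable (fun h => p x h)) ∧
  (∀ x, (∫ h, p x h) = 1) ∧
  (∀ x h, p x (-h) = p x h)

/-- Assumption (H2) -/
def H2 (p : Euc d → Euc d → ℝ) : Prop :=
  (∀ x, Integrable (fun h : Euc d => ‖h‖ ^ 3 * p x h)) ∧
  (∃ M : ℝ, ∀ x, (∫ h : Euc d, ‖h‖ ^ 3 * p x h) ≤ M) ∧
  ∃ m : ℝ → ℝ, Measurable m ∧ (∀ r, 0 ≤ m r) ∧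
    Integrable (fun h : Euc d => (‖h‖ ^ 2 ⊔ ‖h‖ ^ 3) * m ‖h‖) ∧
    (∀ x y h, |p x h - p y h| ≤ ‖x - y‖ * m ‖h‖) ∧
    (∀ x h, p x h ≤ m ‖h‖)

/-- Assumption (H1) -/
def H1 (g : Euc d → Euc d → ℝ) : Prop :=
  (∀ x : Euc d, ContDiff ℝ 2 (fun z => g z x)) ∧
  (∃ C : ℝ, ∀ y x : Euc d, ‖grad1 g y x‖ ≤ C) ∧
  (∃ K : ℝ≥0, LipschitzWith K (fun q : Euc d × Euc d => grad1 g q.1 q.2)) ∧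
  (∃ C : ℝ, ∀ y x : Euc d, ‖hess11 g y x‖ ≤ C) ∧
  (∃ K : ℝ≥0, LipschitzWith K (fun q : Euc d × Euc d => hess11 g q.1 q.2))

/-- drift coefficient b -/
def bCoeff (g p : Euc d → Euc d → ℝ) (x : Euc d) : Euc d :=
  (WithLp.equiv 2 (Fin d → ℝ)).symm fun k =>
    ∫ h : Euc d, h k * max (⟪grad1 g x x, h⟫) 0 * p x h

/-- diffusion matrix a -/
def aMat (g p : Euc d → Euc d → ℝ) (x : Euc d) : Matrix (Fin d) (Fin d) ℝ :=
  Matrix.of fun k l => ∫ h : Euc d, h k * h l * max (⟪h, grad1 g x x⟫) 0 * p x h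

/-- second-order drift coefficient b-tilde -/
def btCoeff (g p : Euc d → Euc d → ℝ) (x : Euc d) : Euc d :=
  (WithLp.equiv 2 (Fin d → ℝ)).symm fun k =>
    (1 / 2) * ∫ h in {h : Euc d | 0 < ⟪h, grad1 g x x⟫},
      h k * hess11 g x x h h * p x h

/-- quadratic form sᵀ a(x) s -/
def quadA (g p : Euc d → Euc d → ℝ) (x s : Euc d) : ℝ :=
  ∑ k, ∑ l, s k * aMat g p x k l * s l

/-- quadratic form sᵀ a(x)⁻¹ s -/
def quadAInv (g p : Euc d → Euc d → ℝ) (x s : Euc d) : ℝ :=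
  ∑ k, ∑ l, s k * (aMat g p x)⁻¹ k l * s l

/-- full Hessian of `g` (as a function on the product space) at `(y,x)` -/
def hessF (g : Euc d → Euc d → ℝ) (y x : Euc d) :
    (Euc d × Euc d) →L[ℝ] (Euc d × Euc d) →L[ℝ] ℝ :=
  fderiv ℝ (fderiv ℝ (fun q : Euc d × Euc d => g q.1 q.2)) (y, x)

/-- action of a matrix on a vector of `Euc d` -/
def mulVecE (M : Matrix (Fin d) (Fin d) ℝ) (v : Euc d) : Euc d :=
  (WithLp.equiv 2 (Fin d → ℝ)).symm (M.mulVec (WithLp.equiv 2 (Fin d → ℝ) v))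

lemma cone_split {d : ℕ} (hd : 0 < d) {G : ℝ → ℝ≥0∞} (hG : Measurable G)
    {P : Set (Euc d)} (hP : MeasurableSet P)
    (hcone : ∀ x : Euc d, x ≠ 0 → (x ∈ P ↔ ‖x‖⁻¹ • x ∈ P)) :
    ∫⁻ x in P, G ‖x‖
      = volume.toSphere {θ : Metric.sphere (0 : Euc d) 1 | (θ : Euc d) ∈ P}
        * ∫⁻ r : Set.Ioi (0:ℝ), G r
            ∂(MeasureTheory.Measure.volumeIoiPow (Module.finrank ℝ (Euc d) - 1)) := by
  haveI : Nonempty (Fin d) := ⟨⟨0, hd⟩⟩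
  haveI : Nontrivial (Euc d) := by
    refine nontrivial_of_ne (EuclideanSpace.single ⟨0, hd⟩ (1:ℝ)) 0 ?_
    intro h
    have := congrFun (congrArg (WithLp.equiv 2 (Fin d → ℝ)) h) ⟨0, hd⟩
    simp [EuclideanSpace.single_apply] at this
  set S : Set (Metric.sphere (0 : Euc d) 1) := {θ | (θ : Euc d) ∈ P} with hSdef
  have hS : MeasurableSet S := hP.preimage (by exact measurable_subtype_coe)
  have h0 : (volume : Measure (Euc d)) {0} = 0 := measure_singleton 0
  have hae : (P ∩ {(0:Euc d)}ᶜ : Set (Euc d)) =ᵐ[volume] P := by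
    refine Filter.eventuallyEq_of_mem (measure_eq_zero_iff_ae_notMem.mp h0) ?_
    intro x hx
    simp only [mem_setOf_eq] at hx
    show (P ∩ {0}ᶜ) x = P x
    simp only [eq_iff_iff]
    show x ∈ P ∩ {0}ᶜ ↔ x ∈ P
    simp [hx]
  rw [← setLIntegral_congr hae]
  have himg : (P ∩ {(0:Euc d)}ᶜ : Set (Euc d)) =
      (Subtype.val '' ((Subtype.val ⁻¹' P) : Set ({(0:Euc d)}ᶜ : Set (Euc d)))) := by
    rw [Subtype.image_preimage_coe, Set.inter_comm]
  rw [himg, ← setLIntegral_subtype (measurableSet_singleton (0:Euc d)).compl _ (fun x => G ‖x‖)]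
  have hpre : ((Subtype.val ⁻¹' P) : Set ({(0:Euc d)}ᶜ : Set (Euc d)))
      = (homeomorphUnitSphereProd (Euc d)) ⁻¹' (S ×ˢ (univ : Set (Set.Ioi (0:ℝ)))) := by
    ext x
    have hx : (x : Euc d) ≠ 0 := x.2
    simp only [mem_preimage, Set.mem_prod, Set.mem_univ, and_true, hSdef, Set.mem_setOf_eq,
      homeomorphUnitSphereProd_apply_fst_coe]
    exact hcone x hx
  rw [hpre]
  have := (MeasureTheory.Measure.measurePreserving_homeomorphUnitSphereProd
    (volume : Measure (Euc d))).setLIntegral_comp_preimage_emb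
    (Homeomorph.measurableEmbedding _) (fun y : Metric.sphere (0:Euc d) 1 × Set.Ioi (0:ℝ) => G y.2)
    (S ×ˢ (univ : Set (Set.Ioi (0:ℝ))))
  rw [show (fun x : ({(0:Euc d)}ᶜ : Set (Euc d)) => G ‖(x : Euc d)‖)
      = fun x => (fun y : Metric.sphere (0:Euc d) 1 × Set.Ioi (0:ℝ) => G y.2)
          ((homeomorphUnitSphereProd (Euc d)) x) from by funext x; simp, this]
  rw [← Measure.prod_restrict, Measure.restrict_univ]
  have := lintegral_prod_mul (μ := (volume : Measure (Euc d)).toSphere.restrict S)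
    (ν := MeasureTheory.Measure.volumeIoiPow (Module.finrank ℝ (Euc d) - 1))
    (f := fun _ : Metric.sphere (0:Euc d) 1 => (1:ℝ≥0∞))
    (g := fun r : Set.Ioi (0:ℝ) => G r) aemeasurable_const
    ((hG.comp measurable_subtype_coe).aemeasurable)
  simp only [one_mul] at this
  rw [this, lintegral_one, Measure.restrict_apply_univ]

lemma euc_nontrivial {d : ℕ} (hd : 0 < d) : Nontrivial (Euc d) := by
  refine nontrivial_of_ne (EuclideanSpace.single ⟨0, hd⟩ (1:ℝ)) 0 ?_
  intro h
  have := congrFun (congrArg (WithLp.equiv 2 (Fin d → ℝ)) h) ⟨0, hd⟩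
  simp [EuclideanSpace.single_apply] at this

lemma sector {d : ℕ} (hd : 0 < d) {G : ℝ → ℝ≥0∞} (hG : Measurable G)
    (hfin : (∫⁻ h : Euc d, G ‖h‖) ≠ ⊤) :
    ∃ C : ℝ≥0∞, C ≠ ⊤ ∧ ∀ (u : Euc d), ‖u‖ = 1 → ∀ ε : ℝ, 0 ≤ ε →
      ∫⁻ h in {h : Euc d | |⟪h, u⟫| ≤ ε * ‖h‖}, G ‖h‖ ≤ C * ENNReal.ofReal ε := by
  haveI : Nontrivial (Euc d) := euc_nontrivial hd
  set i0 : Fin d := ⟨0, hd⟩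
  set ν := MeasureTheory.Measure.volumeIoiPow (Module.finrank ℝ (Euc d) - 1) with hν
  set μS := (volume : Measure (Euc d)).toSphere with hμS
  set I := ∫⁻ r : Set.Ioi (0:ℝ), G r ∂ν with hI
  have hconti0 : Continuous fun h : Euc d => h i0 := by
    exact (continuous_apply i0).comp (PiLp.continuous_ofLp (p := 2) (β := fun _ : Fin d => ℝ))
  -- the coordinate cap
  have hcapm : ∀ ε : ℝ, MeasurableSet {h : Euc d | |h i0| ≤ ε * ‖h‖} := fun ε =>
    measurableSet_le (hconti0.abs.measurable) ((continuous_norm.const_smul ε).measurable)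
  have hcapcone : ∀ ε : ℝ, ∀ x : Euc d, x ≠ 0 →
      (x ∈ {h : Euc d | |h i0| ≤ ε * ‖h‖} ↔ ‖x‖⁻¹ • x ∈ {h : Euc d | |h i0| ≤ ε * ‖h‖}) := by
    intro ε x hx
    have hn : 0 < ‖x‖ := norm_pos_iff.mpr hx
    simp only [Set.mem_setOf_eq, PiLp.smul_apply, smul_eq_mul, norm_smul, norm_inv, norm_norm,
      abs_mul, abs_inv, abs_norm]
    rw [inv_mul_cancel₀ hn.ne', mul_one]
    constructor
    · intro h
      calc ‖x‖⁻¹ * |x i0| ≤ ‖x‖⁻¹ * (ε * ‖x‖) := by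
            exact mul_le_mul_of_nonneg_left h (by positivity)
        _ = ε := by field_simp
    · intro h
      calc |x i0| = ‖x‖ * (‖x‖⁻¹ * |x i0|) := by field_simp
        _ ≤ ‖x‖ * ε := mul_le_mul_of_nonneg_left h hn.le
        _ = ε * ‖x‖ := mul_comm _ _
  -- polar splits
  have hsplit : ∀ ε : ℝ, ∫⁻ x in {h : Euc d | |h i0| ≤ ε * ‖h‖}, G ‖x‖
      = μS {θ : Metric.sphere (0 : Euc d) 1 | (θ : Euc d) ∈ {h : Euc d | |h i0| ≤ ε * ‖h‖}} * I :=
    fun ε => cone_split hd hG (hcapm ε) (hcapcone ε)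
  have htot : (∫⁻ h : Euc d, G ‖h‖) = μS Set.univ * I := by
    have h := cone_split hd hG (MeasurableSet.univ (α := Euc d)) (fun x _ => by simp)
    simp only [Measure.restrict_univ, Set.mem_univ, Set.setOf_true] at h
    exact h
  have hμS0 : μS Set.univ ≠ 0 := by
    rw [hμS, MeasureTheory.Measure.toSphere_apply_univ]
    refine mul_ne_zero ?_ (Metric.measure_ball_pos volume (0 : Euc d) one_pos).ne'
    simp only [ne_eq, Nat.cast_eq_zero]
    exact Module.finrank_pos.ne'
  have hItop : I ≠ ⊤ := by
    intro hIt
    rw [htot, hIt, ENNReal.mul_top hμS0] at hfin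
    exact hfin rfl
  -- the radial constant
  set G₀ : ℝ → ℝ≥0∞ := fun r => (Set.Iio (1:ℝ)).indicator 1 r with hG₀
  have hG₀m : Measurable G₀ := measurable_const.indicator measurableSet_Iio
  set c := ν {r : Set.Ioi (0:ℝ) | (r : ℝ) < 1} with hc
  have hcI : ∀ ε : ℝ, ∫⁻ x in {h : Euc d | |h i0| ≤ ε * ‖h‖}, G₀ ‖x‖
      = μS {θ : Metric.sphere (0 : Euc d) 1 | (θ : Euc d) ∈ {h : Euc d | |h i0| ≤ ε * ‖h‖}} * c := by
    intro ε
    rw [cone_split hd hG₀m (hcapm ε) (hcapcone ε)]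
    congr 1
    rw [hc]
    have hseteq : {r : Set.Ioi (0:ℝ) | (r : ℝ) < 1}
        = Subtype.val ⁻¹' (Set.Iio (1:ℝ)) := rfl
    rw [hseteq, show (fun r : Set.Ioi (0:ℝ) => G₀ (r : ℝ))
        = Set.indicator (Subtype.val ⁻¹' (Set.Iio (1:ℝ))) 1 from ?_]
    · exact lintegral_indicator_one (measurableSet_Iio.preimage measurable_subtype_coe)
    · funext r
      simp [hG₀, Set.indicator]
  have hcval : c = ENNReal.ofReal (1 / d) := by
    have h1 : {r : Set.Ioi (0:ℝ) | (r : ℝ) < 1}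
        = Set.Iio (⟨1, Set.mem_Ioi.mpr one_pos⟩ : Set.Ioi (0:ℝ)) := by
      ext r
      simp only [Set.mem_setOf_eq, Set.mem_Iio, ← Subtype.coe_lt_coe]
    rw [hc, h1, hν, MeasureTheory.Measure.volumeIoiPow_apply_Iio]
    have hn1 : ((Module.finrank ℝ (Euc d) - 1 : ℕ) : ℝ) + 1 = (d : ℝ) := by
      rw [finrank_euclideanSpace_fin, Nat.cast_sub hd]
      ring
    congr 1
    rw [show ((⟨1, Set.mem_Ioi.mpr one_pos⟩ : Set.Ioi (0:ℝ)) : ℝ) = 1 from rfl, one_pow]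
    rw [show ((Module.finrank ℝ (Euc d) - 1 : ℕ) + 1 : ℝ) = ((Module.finrank ℝ (Euc d) - 1 : ℕ) : ℝ) + 1 from by push_cast; ring, hn1]
  have hc0 : c ≠ 0 := by
    rw [hcval]; simp only [ne_eq, ENNReal.ofReal_eq_zero, not_le]
    positivity
  have hctop : c ≠ ⊤ := by rw [hcval]; exact ENNReal.ofReal_ne_top
  set k : ℝ≥0∞ := ENNReal.ofReal 2 * (ENNReal.ofReal 2) ^ (d - 1) with hk
  have hktop : k ≠ ⊤ := ENNReal.mul_ne_top ENNReal.ofReal_ne_top (ENNReal.pow_ne_top ENNReal.ofReal_ne_top)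
  -- box estimate
  have hbox : ∀ ε : ℝ, 0 ≤ ε → ∫⁻ x in {h : Euc d | |h i0| ≤ ε * ‖h‖}, G₀ ‖x‖
      ≤ ENNReal.ofReal ε * k := by
    intro ε hε
    have heq : (fun x : Euc d => G₀ ‖x‖)
        = Set.indicator {x : Euc d | ‖x‖ < 1} 1 := by
      funext x
      simp [hG₀, Set.indicator]
    rw [heq, lintegral_indicator_one (measurableSet_lt continuous_norm.measurable measurable_const),
      Measure.restrict_apply (measurableSet_lt continuous_norm.measurable measurable_const)]
    set Box : Set (Fin d → ℝ) :=
      Set.univ.pi fun i => Set.Icc (-(if i = i0 then ε else 1)) (if i = i0 then ε else 1) with hBox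
    have hsub : {x : Euc d | ‖x‖ < 1} ∩ {h : Euc d | |h i0| ≤ ε * ‖h‖}
        ⊆ (MeasurableEquiv.toLp 2 (Fin d → ℝ)).symm ⁻¹' Box := by
      rintro x ⟨hx1, hx2⟩
      simp only [Set.mem_setOf_eq] at hx1 hx2
      intro i _
      have hxi : |x i| ≤ ‖x‖ := by
        have := EuclideanSpace.norm_eq x
        have h2 : |x i| = Real.sqrt ((x i)^2) := (Real.sqrt_sq_eq_abs _).symm
        rw [h2, this]
        apply Real.sqrt_le_sqrt
        have := Finset.single_le_sum (f := fun j => ‖x j‖ ^ 2)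
          (fun j _ => by positivity) (Finset.mem_univ i)
        simpa [Real.norm_eq_abs, sq_abs] using this
      show (x : Fin d → ℝ) i ∈ Set.Icc _ _
      rw [Set.mem_Icc, ← abs_le]
      by_cases hi : i = i0
      · rw [hi, if_pos rfl]
        calc |x i0| ≤ ε * ‖x‖ := hx2
          _ ≤ ε * 1 := by nlinarith [hx1, norm_nonneg x]
          _ = ε := mul_one ε
      · simp only [if_neg hi]
        exact hxi.trans hx1.le
    calc volume ({x : Euc d | ‖x‖ < 1} ∩ {h : Euc d | |h i0| ≤ ε * ‖h‖})
        ≤ volume ((MeasurableEquiv.toLp 2 (Fin d → ℝ)).symm ⁻¹' Box) := measure_mono hsub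
      _ = volume Box := by
          rw [(EuclideanSpace.volume_preserving_symm_measurableEquiv_toLp (Fin d)).measure_preimage]
          exact (MeasurableSet.univ_pi fun i => measurableSet_Icc).nullMeasurableSet
      _ = ∏ i, volume (Set.Icc (-(if i = i0 then ε else 1)) (if i = i0 then ε else 1)) := by
          rw [hBox, volume_pi_pi]
      _ = ∏ i, ENNReal.ofReal (2 * (if i = i0 then ε else 1)) := by
          refine Finset.prod_congr rfl fun i _ => ?_
          rw [Real.volume_Icc]
          congr 1
          ring
      _ = ENNReal.ofReal ε * k := by
          rw [← Finset.mul_prod_erase Finset.univ _ (Finset.mem_univ i0)]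
          rw [if_pos rfl]
          have hrest : ∏ i ∈ Finset.univ.erase i0, ENNReal.ofReal (2 * (if i = i0 then ε else 1))
              = (ENNReal.ofReal 2) ^ (d - 1) := by
            rw [Finset.prod_congr rfl (fun i hi => by
              rw [if_neg (Finset.ne_of_mem_erase hi), mul_one]), Finset.prod_const,
              Finset.card_erase_of_mem (Finset.mem_univ i0), Finset.card_univ, Fintype.card_fin]
          rw [hrest, hk, show (2:ℝ) * ε = ε * 2 by ring, ENNReal.ofReal_mul hε]
          ring
  -- assemble the constant
  refine ⟨k * (c⁻¹ * I), ENNReal.mul_ne_top hktop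
    (ENNReal.mul_ne_top (ENNReal.inv_ne_top.mpr hc0) hItop), ?_⟩
  intro u hu ε hε
  -- rotate u to the coordinate direction
  have hv : Orthonormal ℝ (Set.restrict {i0} (fun _ : Fin d => u)) := by
    constructor
    · intro i
      exact hu
    · intro i j hij
      exact absurd (Subtype.ext (i.2.trans j.2.symm)) hij
  obtain ⟨b, hb⟩ := hv.exists_orthonormalBasis_extension_of_card_eq
    (by simp [finrank_euclideanSpace_fin])
  have hbu : b i0 = u := hb i0 rfl
  have hpre : {h : Euc d | |⟪h, u⟫| ≤ ε * ‖h‖}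
      = b.repr ⁻¹' {h : Euc d | |h i0| ≤ ε * ‖h‖} := by
    ext h
    simp only [Set.mem_setOf_eq, Set.mem_preimage, LinearIsometryEquiv.norm_map]
    rw [OrthonormalBasis.repr_apply_apply, hbu, real_inner_comm]
  have hrw : ∫⁻ h in {h : Euc d | |⟪h, u⟫| ≤ ε * ‖h‖}, G ‖h‖
      = ∫⁻ x in {h : Euc d | |h i0| ≤ ε * ‖h‖}, G ‖x‖ := by
    rw [hpre]
    have := b.measurePreserving_repr.setLIntegral_comp_preimage_emb
      (b.repr.toHomeomorph.measurableEmbedding) (fun y : Euc d => G ‖y‖)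
      {h : Euc d | |h i0| ≤ ε * ‖h‖}
    rw [← this]
    refine lintegral_congr fun h => ?_
    rw [LinearIsometryEquiv.norm_map]
  rw [hrw, hsplit ε]
  set A := μS {θ : Metric.sphere (0 : Euc d) 1 | (θ : Euc d) ∈ {h : Euc d | |h i0| ≤ ε * ‖h‖}}
  have hAc : A * c ≤ ENNReal.ofReal ε * k := by
    rw [← hcI ε]
    exact hbox ε hε
  calc A * I = (A * c) * (c⁻¹ * I) := by
        rw [show (A * c) * (c⁻¹ * I) = (c * c⁻¹) * (A * I) by ring,
          ENNReal.mul_inv_cancel hc0 hctop, one_mul]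
    _ ≤ (ENNReal.ofReal ε * k) * (c⁻¹ * I) := mul_le_mul_left hAc _
    _ = (k * (c⁻¹ * I)) * ENNReal.ofReal ε := by ring

lemma euc_norm_le {d : ℕ} (z : Euc d) {B : ℝ} (hB : 0 ≤ B) (h : ∀ k, |z k| ≤ B) :
    ‖z‖ ≤ Real.sqrt d * B := by
  rw [EuclideanSpace.norm_eq]
  have h1 : ∑ k, ‖z k‖ ^ 2 ≤ ∑ _k : Fin d, B ^ 2 := by
    refine Finset.sum_le_sum fun k _ => ?_
    rw [Real.norm_eq_abs]
    nlinarith [h k, abs_nonneg (z k)]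
  calc Real.sqrt (∑ k, ‖z k‖ ^ 2) ≤ Real.sqrt (d * B ^ 2) := by
        apply Real.sqrt_le_sqrt; simpa using h1
    _ = Real.sqrt d * B := by
        rw [Real.sqrt_mul (Nat.cast_nonneg d), Real.sqrt_sq hB]

lemma bt_main {d : ℕ} (hd : 0 < d) (g p : Euc d → Euc d → ℝ)
    (hker : IsMutKernel p) (hH1 : H1 g) (hH2 : H2 p) :
    (∃ C : ℝ, ∀ x : Euc d, ‖btCoeff g p x‖ ≤ C) ∧
    (∀ δ : ℝ, 0 < δ → ∃ L : ℝ, 0 ≤ L ∧ ∀ x y : Euc d, δ ≤ ‖grad1 g x x‖ →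
      ‖btCoeff g p x - btCoeff g p y‖ ≤ L * ‖x - y‖) := by
  obtain ⟨hp_meas, hp_nonneg, hp_int, hp_one, hp_symm⟩ := hker
  obtain ⟨hg2, ⟨Cg, hCg⟩, ⟨Kg, hKg⟩, ⟨CH, hCH⟩, ⟨KH, hKH⟩⟩ := hH1
  obtain ⟨hint3, ⟨M, hM⟩, m, hm_meas, hm_nonneg, hm_int, hm_lip, hm_bd⟩ := hH2
  have hKg0 : (0:ℝ) ≤ Kg := Kg.coe_nonneg
  have hKH0 : (0:ℝ) ≤ KH := KH.coe_nonneg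
  set W : Euc d → ℝ := fun h => (‖h‖ ^ 2 ⊔ ‖h‖ ^ 3) * m ‖h‖ with hW
  have hWint : Integrable W := hm_int
  have hWnn : ∀ h, 0 ≤ W h := fun h =>
    mul_nonneg (le_trans (by positivity) (le_max_left (‖h‖ ^ 2) (‖h‖ ^ 3))) (hm_nonneg _)
  have hW3 : ∀ h : Euc d, ‖h‖ ^ 3 * m ‖h‖ ≤ W h := fun h =>
    mul_le_mul_of_nonneg_right (le_max_right _ _) (hm_nonneg _)
  set IW : ℝ := ∫ h, W h with hIW
  have hIWnn : 0 ≤ IW := integral_nonneg hWnn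
  have hCH0 : 0 ≤ CH := le_trans (norm_nonneg (hess11 g 0 0)) (hCH 0 0)
  have hpx : ∀ x : Euc d, Measurable (fun h => p x h) := fun x =>
    hp_meas.comp (measurable_const.prodMk measurable_id)
  have hcoord : ∀ k : Fin d, Continuous fun h : Euc d => h k := fun k =>
    (continuous_apply k).comp (PiLp.continuous_ofLp (p := 2) (β := fun _ : Fin d => ℝ))
  have hcoordle : ∀ (h : Euc d) (k : Fin d), |h k| ≤ ‖h‖ := by
    intro h k
    rw [show |h k| = Real.sqrt ((h k) ^ 2) from (Real.sqrt_sq_eq_abs _).symm,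
      EuclideanSpace.norm_eq]
    apply Real.sqrt_le_sqrt
    have := Finset.single_le_sum (f := fun j => ‖h j‖ ^ 2) (fun j _ => by positivity)
      (Finset.mem_univ k)
    simpa [Real.norm_eq_abs, sq_abs] using this
  set fF : Euc d → Fin d → Euc d → ℝ := fun x k h => h k * hess11 g x x h h * p x h with hfF
  have hBcont : ∀ x : Euc d, Continuous fun h : Euc d => hess11 g x x h h := fun x =>
    (hess11 g x x).continuous.clm_apply continuous_id
  have hfmeas : ∀ x k, AEStronglyMeasurable (fF x k) volume := fun x k =>
    ((((hcoord k).measurable.mul (hBcont x).measurable)).mul (hpx x)).aestronglyMeasurable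
  have hBnorm : ∀ x : Euc d, ∀ h : Euc d, |hess11 g x x h h| ≤ CH * ‖h‖ ^ 2 := by
    intro x h
    calc |hess11 g x x h h| ≤ ‖hess11 g x x‖ * ‖h‖ * ‖h‖ := (hess11 g x x).le_opNorm₂ h h
      _ ≤ CH * ‖h‖ ^ 2 := by nlinarith [hCH x x, norm_nonneg (hess11 g x x), norm_nonneg h]
  have hfb : ∀ x k h, |fF x k h| ≤ CH * W h := by
    intro x k h
    have h1 : |fF x k h| = |h k| * |hess11 g x x h h| * p x h := by
      rw [hfF, abs_mul, abs_mul, abs_of_nonneg (hp_nonneg x h)]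
    rw [h1]
    calc |h k| * |hess11 g x x h h| * p x h ≤ ‖h‖ * (CH * ‖h‖ ^ 2) * m ‖h‖ := by
          apply mul_le_mul (mul_le_mul (hcoordle h k) (hBnorm x h) (abs_nonneg _) (norm_nonneg _))
            (hm_bd x h) (hp_nonneg x h) (by positivity)
      _ = CH * (‖h‖ ^ 3 * m ‖h‖) := by ring
      _ ≤ CH * W h := mul_le_mul_of_nonneg_left (hW3 h) hCH0
  have hfint : ∀ x k, Integrable (fF x k) := fun x k =>
    (hWint.const_mul CH).mono' (hfmeas x k) (Filter.Eventually.of_forall fun h => by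
      rw [Real.norm_eq_abs]; exact hfb x k h)
  have hdiag : ∀ x y : Euc d, dist ((x, x) : Euc d × Euc d) ((y, y) : Euc d × Euc d)
      = dist x y := by
    intro x y
    rw [Prod.dist_eq]
    simp
  have hvlip : ∀ x y : Euc d, ‖grad1 g x x - grad1 g y y‖ ≤ Kg * ‖x - y‖ := by
    intro x y
    have h0 := hKg.dist_le_mul (x, x) (y, y)
    rw [hdiag] at h0
    simpa [dist_eq_norm] using h0
  have hHlip : ∀ x y : Euc d, ‖hess11 g x x - hess11 g y y‖ ≤ KH * ‖x - y‖ := by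
    intro x y
    have h0 := hKH.dist_le_mul (x, x) (y, y)
    rw [hdiag] at h0
    simpa [dist_eq_norm] using h0
  have hflip : ∀ x y : Euc d, ∀ k h, |fF x k h - fF y k h| ≤ ((KH : ℝ) + CH) * ‖x - y‖ * W h := by
    intro x y k h
    have hsplit : fF x k h - fF y k h
        = h k * ((hess11 g x x h h - hess11 g y y h h) * p x h
            + hess11 g y y h h * (p x h - p y h)) := by rw [hfF]; ring
    have hB : |hess11 g x x h h - hess11 g y y h h| ≤ (KH : ℝ) * ‖x - y‖ * ‖h‖ ^ 2 := by
      have h1 : hess11 g x x h h - hess11 g y y h h = (hess11 g x x - hess11 g y y) h h := by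
        simp [ContinuousLinearMap.sub_apply]
      rw [h1]
      calc |(hess11 g x x - hess11 g y y) h h| ≤ ‖hess11 g x x - hess11 g y y‖ * ‖h‖ * ‖h‖ :=
            (hess11 g x x - hess11 g y y).le_opNorm₂ h h
        _ ≤ (KH : ℝ) * ‖x - y‖ * ‖h‖ ^ 2 := by
            nlinarith [hHlip x y, norm_nonneg h, norm_nonneg (hess11 g x x - hess11 g y y)]
    have hinner : |(hess11 g x x h h - hess11 g y y h h) * p x h
        + hess11 g y y h h * (p x h - p y h)|
        ≤ (KH : ℝ) * ‖x - y‖ * ‖h‖ ^ 2 * m ‖h‖ + CH * ‖h‖ ^ 2 * (‖x - y‖ * m ‖h‖) := by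
      calc |(hess11 g x x h h - hess11 g y y h h) * p x h
            + hess11 g y y h h * (p x h - p y h)|
          ≤ |(hess11 g x x h h - hess11 g y y h h)| * p x h
            + |hess11 g y y h h| * |p x h - p y h| := by
            refine (abs_add_le _ _).trans ?_
            rw [abs_mul, abs_mul, abs_of_nonneg (hp_nonneg x h)]
        _ ≤ (KH : ℝ) * ‖x - y‖ * ‖h‖ ^ 2 * m ‖h‖ + CH * ‖h‖ ^ 2 * (‖x - y‖ * m ‖h‖) := by
            refine add_le_add ?_ ?_
            · exact mul_le_mul hB (hm_bd x h) (hp_nonneg x h) (by positivity)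
            · exact mul_le_mul (hBnorm y h) (hm_lip x y h) (abs_nonneg _) (by positivity)
    calc |fF x k h - fF y k h| = |h k| * |(hess11 g x x h h - hess11 g y y h h) * p x h
          + hess11 g y y h h * (p x h - p y h)| := by rw [hsplit, abs_mul]
      _ ≤ ‖h‖ * ((KH : ℝ) * ‖x - y‖ * ‖h‖ ^ 2 * m ‖h‖ + CH * ‖h‖ ^ 2 * (‖x - y‖ * m ‖h‖)) := by
          refine mul_le_mul (hcoordle h k) hinner (abs_nonneg _) (norm_nonneg _)
      _ = ((KH : ℝ) + CH) * ‖x - y‖ * (‖h‖ ^ 3 * m ‖h‖) := by ring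
      _ ≤ ((KH : ℝ) + CH) * ‖x - y‖ * W h := by
          refine mul_le_mul_of_nonneg_left (hW3 h) ?_
          positivity
  have hAmeas : ∀ x : Euc d, MeasurableSet {h : Euc d | 0 < ⟪h, grad1 g x x⟫} := fun x =>
    measurableSet_lt measurable_const ((continuous_id.inner continuous_const).measurable)
  -- boundedness of components
  have hcB : ∀ (x : Euc d) (k : Fin d),
      |∫ h in {h : Euc d | 0 < ⟪h, grad1 g x x⟫}, fF x k h| ≤ CH * IW := by
    intro x k
    calc |∫ h in {h : Euc d | 0 < ⟪h, grad1 g x x⟫}, fF x k h|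
        ≤ ∫ h in {h : Euc d | 0 < ⟪h, grad1 g x x⟫}, |fF x k h| := by
          simpa [Real.norm_eq_abs] using
            norm_integral_le_integral_norm (μ := volume.restrict _) (fF x k)
      _ ≤ ∫ h in {h : Euc d | 0 < ⟪h, grad1 g x x⟫}, CH * W h := by
          refine integral_mono ((hfint x k).abs.restrict) ((hWint.const_mul CH).restrict)
            fun h => hfb x k h
      _ ≤ ∫ h, CH * W h := setIntegral_le_integral (hWint.const_mul CH)
          (Filter.Eventually.of_forall fun h => mul_nonneg hCH0 (hWnn h))
      _ = CH * IW := integral_const_mul CH W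
  -- the sector constant
  have hGmeas : Measurable fun r : ℝ => ENNReal.ofReal ((r ^ 2 ⊔ r ^ 3) * m r) :=
    (((measurable_id.pow_const 2).sup (measurable_id.pow_const 3)).mul hm_meas).ennreal_ofReal
  have hGfin : (∫⁻ h : Euc d, ENNReal.ofReal ((‖h‖ ^ 2 ⊔ ‖h‖ ^ 3) * m ‖h‖)) ≠ ⊤ := by
    have h1 : (∫⁻ h : Euc d, ENNReal.ofReal ((‖h‖ ^ 2 ⊔ ‖h‖ ^ 3) * m ‖h‖))
        ≤ ∫⁻ h : Euc d, (‖W h‖₊ : ℝ≥0∞) := by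
      refine lintegral_mono fun h => ?_
      rw [hW]
      exact Real.ofReal_le_enorm _
    exact (lt_of_le_of_lt h1 hWint.hasFiniteIntegral).ne
  obtain ⟨Cs, hCstop, hCs⟩ := sector hd hGmeas hGfin
  set CsR : ℝ := Cs.toReal with hCsR
  have hCsR0 : 0 ≤ CsR := ENNReal.toReal_nonneg
  -- the band estimate, real form
  have hband : ∀ (u : Euc d), ‖u‖ = 1 → ∀ ε : ℝ, 0 ≤ ε →
      ∫ h, Set.indicator {h : Euc d | |⟪h, u⟫| ≤ ε * ‖h‖} W h ≤ CsR * ε := by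
    intro u hu ε hε
    have hBandM : MeasurableSet {h : Euc d | |⟪h, u⟫| ≤ ε * ‖h‖} :=
      measurableSet_le ((continuous_id.inner continuous_const).abs.measurable)
        ((continuous_norm.const_smul ε).measurable)
    have hind : Integrable (Set.indicator {h : Euc d | |⟪h, u⟫| ≤ ε * ‖h‖} W) :=
      hWint.indicator hBandM
    rw [integral_eq_lintegral_of_nonneg_ae
      (Filter.Eventually.of_forall fun h => Set.indicator_nonneg (fun h _ => hWnn h) h)
      hind.aestronglyMeasurable]
    have h2 : ∫⁻ h, ENNReal.ofReal (Set.indicator {h : Euc d | |⟪h, u⟫| ≤ ε * ‖h‖} W h)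
        = ∫⁻ h in {h : Euc d | |⟪h, u⟫| ≤ ε * ‖h‖}, ENNReal.ofReal (W h) := by
      rw [← lintegral_indicator hBandM]
      refine lintegral_congr fun h => ?_
      by_cases hh : h ∈ {h : Euc d | |⟪h, u⟫| ≤ ε * ‖h‖}
      · rw [Set.indicator_of_mem hh, Set.indicator_of_mem hh]
      · rw [Set.indicator_of_notMem hh, Set.indicator_of_notMem hh, ENNReal.ofReal_zero]
    rw [h2]
    have h3 := hCs u hu ε hε
    calc (∫⁻ h in {h : Euc d | |⟪h, u⟫| ≤ ε * ‖h‖}, ENNReal.ofReal (W h)).toReal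
        ≤ (Cs * ENNReal.ofReal ε).toReal := by
          refine ENNReal.toReal_mono (ENNReal.mul_ne_top hCstop ENNReal.ofReal_ne_top) ?_
          exact h3
      _ = CsR * ε := by rw [ENNReal.toReal_mul, ENNReal.toReal_ofReal hε]
  -- the Lipschitz estimate on components
  have hcLip : ∀ δ : ℝ, 0 < δ → ∀ x y : Euc d, δ ≤ ‖grad1 g x x‖ → ∀ k : Fin d,
      |(∫ h in {h : Euc d | 0 < ⟪h, grad1 g x x⟫}, fF x k h)
        - ∫ h in {h : Euc d | 0 < ⟪h, grad1 g y y⟫}, fF y k h|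
      ≤ (CH * (CsR * Kg / δ) + ((KH : ℝ) + CH) * IW) * ‖x - y‖ := by
    intro δ hδ x y hvx k
    have hvxpos : 0 < ‖grad1 g x x‖ := lt_of_lt_of_le hδ hvx
    have hvx0 : grad1 g x x ≠ 0 := norm_pos_iff.mp hvxpos
    set u : Euc d := ‖grad1 g x x‖⁻¹ • grad1 g x x with hu_def
    have hu : ‖u‖ = 1 := by
      rw [hu_def, norm_smul, norm_inv, norm_norm, inv_mul_cancel₀ hvxpos.ne']
    set ε : ℝ := Kg * ‖x - y‖ / δ with hε_def
    have hε : 0 ≤ ε := div_nonneg (mul_nonneg hKg0 (norm_nonneg _)) hδ.le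
    set Band : Set (Euc d) := {h : Euc d | |⟪h, u⟫| ≤ ε * ‖h‖} with hBand_def
    have hBandM : MeasurableSet Band :=
      measurableSet_le ((continuous_id.inner continuous_const).abs.measurable)
        ((continuous_norm.const_smul ε).measurable)
    set Ax : Set (Euc d) := {h : Euc d | 0 < ⟪h, grad1 g x x⟫} with hAx_def
    set Ay : Set (Euc d) := {h : Euc d | 0 < ⟪h, grad1 g y y⟫} with hAy_def
    -- indicator difference is supported in the band
    have hkey : ∀ h : Euc d, (h ∈ Ax ∧ h ∉ Ay) ∨ (h ∉ Ax ∧ h ∈ Ay) → h ∈ Band := by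
      intro h hcase
      have hinner : |⟪h, grad1 g x x⟫ - ⟪h, grad1 g y y⟫| ≤ Kg * ‖x - y‖ * ‖h‖ := by
        rw [← inner_sub_right]
        calc |⟪h, grad1 g x x - grad1 g y y⟫| ≤ ‖h‖ * ‖grad1 g x x - grad1 g y y‖ :=
              abs_real_inner_le_norm _ _
          _ ≤ ‖h‖ * (Kg * ‖x - y‖) :=
              mul_le_mul_of_nonneg_left (hvlip x y) (norm_nonneg h)
          _ = Kg * ‖x - y‖ * ‖h‖ := by ring
      have hvd : |⟪h, grad1 g x x⟫| ≤ Kg * ‖x - y‖ * ‖h‖ := by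
        rcases hcase with ⟨h1, h2⟩ | ⟨h1, h2⟩
        · rw [hAx_def] at h1; rw [hAy_def] at h2
          simp only [Set.mem_setOf_eq, not_lt] at h1 h2
          rw [abs_of_pos h1]
          calc ⟪h, grad1 g x x⟫ ≤ ⟪h, grad1 g x x⟫ - ⟪h, grad1 g y y⟫ := by linarith
            _ ≤ |⟪h, grad1 g x x⟫ - ⟪h, grad1 g y y⟫| := le_abs_self _
            _ ≤ _ := hinner
        · rw [hAx_def] at h1; rw [hAy_def] at h2
          simp only [Set.mem_setOf_eq, not_lt] at h1 h2
          rw [abs_of_nonpos h1]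
          calc -⟪h, grad1 g x x⟫ ≤ ⟪h, grad1 g y y⟫ - ⟪h, grad1 g x x⟫ := by linarith
            _ ≤ |⟪h, grad1 g x x⟫ - ⟪h, grad1 g y y⟫| := by
                rw [abs_sub_comm]; exact le_abs_self _
            _ ≤ _ := hinner
      show |⟪h, u⟫| ≤ ε * ‖h‖
      have hiu : ⟪h, u⟫ = ‖grad1 g x x‖⁻¹ * ⟪h, grad1 g x x⟫ := real_inner_smul_right _ _ _
      rw [hiu, abs_mul, abs_inv, abs_norm]
      calc ‖grad1 g x x‖⁻¹ * |⟪h, grad1 g x x⟫| ≤ δ⁻¹ * (Kg * ‖x - y‖ * ‖h‖) := by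
            refine mul_le_mul (inv_anti₀ hδ hvx) hvd (abs_nonneg _) (by positivity)
        _ = ε * ‖h‖ := by rw [hε_def]; field_simp
    have hInd1 : Integrable (Set.indicator Ax (fF x k)) := (hfint x k).indicator (hAmeas x)
    have hInd2 : Integrable (Set.indicator Ay (fF y k)) := (hfint y k).indicator (hAmeas y)
    have hdom : Integrable (fun h => Set.indicator Band (fun h => CH * W h) h
        + (((KH : ℝ) + CH) * ‖x - y‖) * W h) :=
      ((hWint.const_mul CH).indicator hBandM).add (hWint.const_mul _)
    have hptw : ∀ h : Euc d, |Set.indicator Ax (fF x k) h - Set.indicator Ay (fF y k) h|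
        ≤ Set.indicator Band (fun h => CH * W h) h + (((KH : ℝ) + CH) * ‖x - y‖) * W h := by
      intro h
      have hr2nn : 0 ≤ (((KH : ℝ) + CH) * ‖x - y‖) * W h := by
        have := hWnn h; positivity
      have hbandnn : 0 ≤ Set.indicator Band (fun h => CH * W h) h :=
        Set.indicator_nonneg (fun h _ => mul_nonneg hCH0 (hWnn h)) h
      by_cases h1 : h ∈ Ax <;> by_cases h2 : h ∈ Ay
      · rw [Set.indicator_of_mem h1, Set.indicator_of_mem h2]
        refine le_add_of_nonneg_of_le hbandnn ?_
        calc |fF x k h - fF y k h| ≤ ((KH : ℝ) + CH) * ‖x - y‖ * W h := hflip x y k h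
          _ = (((KH : ℝ) + CH) * ‖x - y‖) * W h := by ring
      · rw [Set.indicator_of_mem h1, Set.indicator_of_notMem h2, sub_zero]
        refine le_add_of_le_of_nonneg ?_ hr2nn
        rw [Set.indicator_of_mem (hkey h (Or.inl ⟨h1, h2⟩))]
        exact hfb x k h
      · rw [Set.indicator_of_notMem h1, Set.indicator_of_mem h2, zero_sub, abs_neg]
        refine le_add_of_le_of_nonneg ?_ hr2nn
        rw [Set.indicator_of_mem (hkey h (Or.inr ⟨h1, h2⟩))]
        exact hfb y k h
      · rw [Set.indicator_of_notMem h1, Set.indicator_of_notMem h2, sub_zero, abs_zero]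
        exact add_nonneg hbandnn hr2nn
    have hbandint : Integrable (Set.indicator Band (fun h => CH * W h)) :=
      (hWint.const_mul CH).indicator hBandM
    calc |(∫ h in Ax, fF x k h) - ∫ h in Ay, fF y k h|
        = |∫ h, (Set.indicator Ax (fF x k) h - Set.indicator Ay (fF y k) h)| := by
          rw [integral_sub hInd1 hInd2, integral_indicator (hAmeas x),
            integral_indicator (hAmeas y)]
      _ ≤ ∫ h, |Set.indicator Ax (fF x k) h - Set.indicator Ay (fF y k) h| := by
          simpa [Real.norm_eq_abs] using
            norm_integral_le_integral_norm
              (fun h => Set.indicator Ax (fF x k) h - Set.indicator Ay (fF y k) h)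
      _ ≤ ∫ h, (Set.indicator Band (fun h => CH * W h) h
            + (((KH : ℝ) + CH) * ‖x - y‖) * W h) :=
          integral_mono (hInd1.sub hInd2).abs hdom hptw
      _ = (∫ h, Set.indicator Band (fun h => CH * W h) h)
            + (((KH : ℝ) + CH) * ‖x - y‖) * IW := by
          rw [integral_add hbandint (hWint.const_mul _), integral_const_mul]
      _ ≤ CH * (CsR * ε) + (((KH : ℝ) + CH) * ‖x - y‖) * IW := by
          refine add_le_add_left ?_ _
          have heq2 : (fun h => Set.indicator Band (fun h => CH * W h) h)
              = fun h => CH * Set.indicator Band W h := by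
            funext h
            by_cases hh : h ∈ Band
            · rw [Set.indicator_of_mem hh, Set.indicator_of_mem hh]
            · rw [Set.indicator_of_notMem hh, Set.indicator_of_notMem hh, mul_zero]
          rw [heq2, integral_const_mul]
          exact mul_le_mul_of_nonneg_left (hband u hu ε hε) hCH0
      _ = (CH * (CsR * Kg / δ) + ((KH : ℝ) + CH) * IW) * ‖x - y‖ := by
          rw [hε_def]
          field_simp
  -- assemble
  constructor
  · refine ⟨Real.sqrt d * ((1 / 2) * (CH * IW)), fun x => ?_⟩
    refine euc_norm_le _ (mul_nonneg (by norm_num) (mul_nonneg hCH0 hIWnn)) fun k => ?_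
    have hk : (btCoeff g p x) k
        = (1 / 2) * ∫ h in {h : Euc d | 0 < ⟪h, grad1 g x x⟫}, fF x k h := rfl
    rw [hk, abs_mul, abs_of_nonneg (by norm_num : (0:ℝ) ≤ (1:ℝ)/2)]
    exact mul_le_mul_of_nonneg_left (hcB x k) (by norm_num)
  · intro δ hδ
    set L : ℝ := Real.sqrt d * ((1 / 2) * (CH * (CsR * Kg / δ) + ((KH : ℝ) + CH) * IW))
      with hL_def
    have hsum_nn : 0 ≤ CH * (CsR * Kg / δ) + ((KH : ℝ) + CH) * IW :=
      add_nonneg (mul_nonneg hCH0 (div_nonneg (mul_nonneg hCsR0 hKg0) hδ.le))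
        (mul_nonneg (add_nonneg hKH0 hCH0) hIWnn)
    have hLinn : 0 ≤ (1 / 2) * (CH * (CsR * Kg / δ) + ((KH : ℝ) + CH) * IW) :=
      mul_nonneg (by norm_num) hsum_nn
    refine ⟨L, mul_nonneg (Real.sqrt_nonneg _) hLinn, fun x y hvx => ?_⟩
    have hzk : ∀ k : Fin d, |(btCoeff g p x - btCoeff g p y) k|
        ≤ (1 / 2) * ((CH * (CsR * Kg / δ) + ((KH : ℝ) + CH) * IW) * ‖x - y‖) := by
      intro k
      have hk0 : (btCoeff g p x - btCoeff g p y) k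
          = (btCoeff g p x) k - (btCoeff g p y) k := rfl
      have hk1 : (btCoeff g p x) k
          = (1 / 2) * ∫ h in {h : Euc d | 0 < ⟪h, grad1 g x x⟫}, fF x k h := rfl
      have hk2 : (btCoeff g p y) k
          = (1 / 2) * ∫ h in {h : Euc d | 0 < ⟪h, grad1 g y y⟫}, fF y k h := rfl
      rw [hk0, hk1, hk2, ← mul_sub, abs_mul, abs_of_nonneg (by norm_num : (0:ℝ) ≤ (1:ℝ)/2)]
      exact mul_le_mul_of_nonneg_left (hcLip δ hδ x y hvx k) (by norm_num)
    have hBnn : 0 ≤ (1 / 2) * ((CH * (CsR * Kg / δ) + ((KH : ℝ) + CH) * IW) * ‖x - y‖) :=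
      mul_nonneg (by norm_num) (mul_nonneg hsum_nn (norm_nonneg _))
    calc ‖btCoeff g p x - btCoeff g p y‖
        ≤ Real.sqrt d * ((1 / 2) * ((CH * (CsR * Kg / δ) + ((KH : ℝ) + CH) * IW) * ‖x - y‖)) :=
          euc_norm_le _ hBnn hzk
      _ = L * ‖x - y‖ := by rw [hL_def]; ring

theorem stmt3 {d : ℕ} (hd : 1 ≤ d) (g p : Euc d → Euc d → ℝ)
    (hker : IsMutKernel p) (hH1 : H1 g) (hH2 : H2 p) :
    (∃ C : ℝ, ∀ x : Euc d, ‖btCoeff g p x‖ ≤ C) ∧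
    (∀ K : Set (Euc d), IsCompact K → Convex ℝ K → K ∩ Gam g = ∅ →
      ∃ L : ℝ≥0, LipschitzOnWith L (btCoeff g p) K) ∧
    (∀ x : Euc d, x ∉ Gam g → ∃ ε : ℝ, 0 < ε ∧ Metric.ball x ε ∩ Gam g = ∅ ∧
      ∃ L : ℝ≥0, LipschitzOnWith L (btCoeff g p) (Metric.ball x ε)) := by
  obtain ⟨hbdd, hlip⟩ := bt_main (by omega : 0 < d) g p hker hH1 hH2
  obtain ⟨Kg, hKg⟩ := hH1.2.2.1
  have hvcont : Continuous fun z : Euc d => grad1 g z z :=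
    hKg.continuous.comp (continuous_id.prodMk continuous_id)
  have hvlip : ∀ x y : Euc d, ‖grad1 g x x - grad1 g y y‖ ≤ Kg * ‖x - y‖ := by
    intro x y
    have h0 := hKg.dist_le_mul (x, x) (y, y)
    rw [Prod.dist_eq] at h0
    simp only [max_self] at h0
    simpa [dist_eq_norm] using h0
  refine ⟨hbdd, ?_, ?_⟩
  · intro K hK _hKc hKG
    rcases K.eq_empty_or_nonempty with rfl | hne
    · exact ⟨1, by simp⟩
    · obtain ⟨x0, hx0K, hmin⟩ := hK.exists_isMinOn hne (hvcont.norm.continuousOn)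
      have hδ : 0 < ‖grad1 g x0 x0‖ := by
        rcases eq_or_ne (grad1 g x0 x0) 0 with h0 | h0
        · exfalso
          have hmem : x0 ∈ K ∩ Gam g := ⟨hx0K, h0⟩
          rw [hKG] at hmem
          exact hmem
        · exact norm_pos_iff.mpr h0
      obtain ⟨L, hL0, hLip⟩ := hlip _ hδ
      refine ⟨Real.toNNReal L, LipschitzOnWith.of_dist_le_mul fun x hx y hy => ?_⟩
      rw [dist_eq_norm, dist_eq_norm, Real.coe_toNNReal L hL0]
      exact hLip x y ((isMinOn_iff.mp hmin) x hx)
  · intro x hx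
    have hvx : grad1 g x x ≠ 0 := hx
    have hδ0 : 0 < ‖grad1 g x x‖ := norm_pos_iff.mpr hvx
    set δ0 := ‖grad1 g x x‖ with hδ0def
    have hKg1 : (0:ℝ) < (Kg:ℝ) + 1 := by positivity
    set ε := δ0 / (2 * ((Kg:ℝ) + 1)) with hεdef
    have hεpos : 0 < ε := by positivity
    have hball : ∀ y ∈ Metric.ball x ε, δ0 / 2 ≤ ‖grad1 g y y‖ := by
      intro y hy
      have h2 : ‖x - y‖ < ε := by
        rw [← dist_eq_norm, dist_comm]
        exact Metric.mem_ball.mp hy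
      have h3 : ‖grad1 g x x‖ - ‖grad1 g y y‖ ≤ (Kg:ℝ) * ‖x - y‖ :=
        (norm_sub_norm_le _ _).trans (hvlip x y)
      have h4 : (Kg:ℝ) * ‖x - y‖ ≤ ((Kg:ℝ) + 1) * ε := by
        apply mul_le_mul (by linarith) h2.le (norm_nonneg _) (by positivity)
      have h5 : ((Kg:ℝ) + 1) * ε = δ0 / 2 := by
        rw [hεdef]
        field_simp
      linarith
    refine ⟨ε, hεpos, ?_, ?_⟩
    · rw [Set.eq_empty_iff_forall_notMem]
      rintro y ⟨hy1, hy2⟩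
      have hge := hball y hy1
      have hzero : grad1 g y y = 0 := hy2
      rw [hzero, norm_zero] at hge
      linarith
    · obtain ⟨L, hL0, hLip⟩ := hlip (δ0 / 2) (by positivity)
      refine ⟨Real.toNNReal L, LipschitzOnWith.of_dist_le_mul fun a ha b hb => ?_⟩
      rw [dist_eq_norm, dist_eq_norm, Real.coe_toNNReal L hL0]
      exact hLip a b (hball a ha)
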